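/- In the ring Z[t, t⁻¹] of Laurent polynomials over the integers, for all natural numbers i and n ≥ 1, the element t^(n^(2i+1)) − 1 lies in the ideal (n, t−1)^i. -/
import Mathlib

lemma step_lemma {R : Type*} [CommRing R] (I : Ideal R) (x : R) (n : ℕ)
    (hnI : (n : R) ∈ I) (hx : x - 1 ∈ I) (k : ℕ) (h : x - 1 ∈ I ^ k) :
    x ^ n - 1 ∈ I ^ (k + 1) := by
  have hfac : x ^ n - 1 = (x - 1) * (∑ j ∈ Finset.range n, x ^ j) := by
    rw [mul_comm, geom_sum_mul]
  have hsum : (∑ j ∈ Finset.range n, x ^ j) ∈ I := by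
    have h1 : (∑ j ∈ Finset.range n, x ^ j) =
        (∑ j ∈ Finset.range n, (x ^ j - 1)) + (n : R) := by
      rw [Finset.sum_sub_distrib]
      simp
    rw [h1]
    refine Ideal.add_mem I (Ideal.sum_mem I fun j _ => ?_) hnI
    obtain ⟨c, hc⟩ : (x - 1) ∣ x ^ j - 1 := by
      simpa using sub_dvd_pow_sub_pow x 1 j
    rw [hc]
    exact Ideal.mul_mem_right _ _ hx
  rw [hfac, pow_succ]
  exact Ideal.mul_mem_mul h hsum

lemma chain_lemma {R : Type*} [CommRing R] (I : Ideal R) (x : R) (n : ℕ)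
    (hnI : (n : R) ∈ I) (hx : x - 1 ∈ I) (k : ℕ) :
    x ^ (n ^ k) - 1 ∈ I ^ (k + 1) := by
  induction k with
  | zero => simpa using hx
  | succ k ih =>
      have hy : x ^ (n ^ k) - 1 ∈ I := by
        have := Ideal.pow_le_pow_right (n := k + 1) (by omega : 1 ≤ k + 1) ih
        simpa using this
      have := step_lemma I (x ^ (n ^ k)) n hnI hy (k + 1) ih
      rwa [← pow_mul, ← pow_succ] at this

/-- In the ring `ℤ[t,t⁻¹]` of Laurent polynomials over the integers,
for all natural numbers `i` and `n ≥ 1`, the element `t^(n^(2i+1)) − 1` lies in the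
ideal `(n, t−1)^i`. -/
theorem stmt1 (n i : ℕ) (hn : 1 ≤ n) :
    (LaurentPolynomial.T ((n : ℤ) ^ (2 * i + 1)) : LaurentPolynomial ℤ) - 1 ∈
      (Ideal.span {((n : ℤ) : LaurentPolynomial ℤ),
        LaurentPolynomial.T 1 - 1}) ^ i := by
  set I : Ideal (LaurentPolynomial ℤ) :=
    Ideal.span {((n : ℤ) : LaurentPolynomial ℤ), LaurentPolynomial.T 1 - 1} with hI
  have hnI : ((n : ℤ) : LaurentPolynomial ℤ) ∈ I :=
    Ideal.subset_span (by simp)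
  have hxI : (LaurentPolynomial.T 1 : LaurentPolynomial ℤ) - 1 ∈ I :=
    Ideal.subset_span (by simp)
  have hnI' : ((n : ℕ) : LaurentPolynomial ℤ) ∈ I := by
    have : ((n : ℕ) : LaurentPolynomial ℤ) = ((n : ℤ) : LaurentPolynomial ℤ) := by
      push_cast; ring
    rwa [this]
  have key := chain_lemma I (LaurentPolynomial.T 1) n hnI' hxI (2 * i + 1)
  have hT : (LaurentPolynomial.T 1 : LaurentPolynomial ℤ) ^ (n ^ (2 * i + 1)) =
      LaurentPolynomial.T ((n : ℤ) ^ (2 * i + 1)) := by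
    rw [LaurentPolynomial.T_pow]
    push_cast
    ring_nf
  rw [hT] at key
  exact Ideal.pow_le_pow_right (by omega : i ≤ 2 * i + 1 + 1) key
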